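/- Let M_k = max_{1≤j≤2^k} w_{k,j} be the maximal interval length at generation k of the recursive uniform fragmentation of [0,1]. Then for every α ≥ 1, E[M_k] ≤ (2/(1+α))^{k/α}. In particular E[M_k] ≤ ρ^k where ρ ≈ 0.7930 is the larger real root of ρ^{-1} = -2e·ln ρ. -/

import Mathlib

open MeasureTheory ProbabilityTheory

section FragAux
set_option linter.unusedSectionVars false

variable {Ω : Type*} [m0 : MeasurableSpace Ω]

/-- σ-algebra generated by the uniforms with level `< k`. -/
def fragSA (U : ℕ → ℕ → Ω → ℝ) (k : ℕ) : MeasurableSpace Ω :=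
  ⨆ (p : ℕ × ℕ) (_ : p.1 < k), MeasurableSpace.comap (U p.1 p.2) inferInstance

lemma fragSA_mono (U : ℕ → ℕ → Ω → ℝ) {k l : ℕ} (h : k ≤ l) : fragSA U k ≤ fragSA U l :=
  iSup₂_le fun p hp => le_iSup₂ (f := fun (p : ℕ × ℕ) (_ : p.1 < l) =>
    MeasurableSpace.comap (U p.1 p.2) inferInstance) p (lt_of_lt_of_le hp h)

lemma fragSA_le (U : ℕ → ℕ → Ω → ℝ) (hUm : ∀ k j, Measurable (U k j)) (k : ℕ) :
    fragSA U k ≤ m0 :=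
  iSup₂_le fun p _ => (hUm p.1 p.2).comap_le

lemma comap_le_fragSA (U : ℕ → ℕ → Ω → ℝ) {i j k : ℕ} (h : i < k) :
    MeasurableSpace.comap (U i j) inferInstance ≤ fragSA U k :=
  le_iSup₂ (f := fun (p : ℕ × ℕ) (_ : p.1 < k) =>
    MeasurableSpace.comap (U p.1 p.2) inferInstance) (i, j) h

lemma measurable_comap_fragSA (U : ℕ → ℕ → Ω → ℝ) {i j k : ℕ} (h : i < k) :
    Measurable[fragSA U k] (U i j) :=
  (Measurable.of_comap_le le_rfl).mono (comap_le_fragSA U h) le_rfl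

lemma measurable_Y_frag (U Y : ℕ → ℕ → Ω → ℝ)
    (hY00 : ∀ ω, Y 0 0 ω = 0) (hY01 : ∀ ω, Y 0 1 ω = 1)
    (hYeven : ∀ k j, j ≤ 2 ^ k → ∀ ω, Y (k+1) (2*j) ω = Y k j ω)
    (hYodd : ∀ k j, 1 ≤ j → j ≤ 2 ^ k → ∀ ω,
      Y (k+1) (2*j - 1) ω = (1 - U k j ω) * Y k (j-1) ω + U k j ω * Y k j ω) :
    ∀ k j, j ≤ 2 ^ k → Measurable[fragSA U k] (Y k j) := by
  intro k
  induction k with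
  | zero =>
    intro j hj
    interval_cases j
    · have : Y 0 0 = fun _ => (0:ℝ) := funext hY00
      rw [this]; exact measurable_const
    · have : Y 0 1 = fun _ => (1:ℝ) := funext hY01
      rw [this]; exact measurable_const
  | succ k ih =>
    intro m hm
    rcases Nat.even_or_odd m with ⟨r, hr⟩ | ⟨r, hr⟩
    · -- m = 2r
      have hr2 : r ≤ 2 ^ k := by
        have : m = 2 * r := by omega
        subst this; rw [pow_succ] at hm; omega
      have : Y (k+1) m = Y k r := by
        funext ω
        have := hYeven k r hr2 ω
        rw [show m = 2*r by omega]; exact this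
      rw [this]
      exact (ih r hr2).mono (fragSA_mono U (Nat.le_succ k)) le_rfl
    · -- m = 2r+1 = 2(r+1)-1
      set j := r + 1 with hj
      have h1 : 1 ≤ j := Nat.le_add_left 1 r
      have h2 : j ≤ 2 ^ k := by
        have : m = 2*j - 1 := by omega
        subst this
        rw [pow_succ] at hm; omega
      have : Y (k+1) m = fun ω => (1 - U k j ω) * Y k (j-1) ω + U k j ω * Y k j ω := by
        funext ω
        rw [show m = 2*j - 1 by omega]
        exact hYodd k j h1 h2 ω
      rw [this]
      have hU : Measurable[fragSA U (k+1)] (U k j) :=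
        measurable_comap_fragSA U (Nat.lt_succ_self k)
      have hY1 : Measurable[fragSA U (k+1)] (Y k (j-1)) :=
        (ih (j-1) (le_trans (Nat.sub_le _ _) h2)).mono (fragSA_mono U (Nat.le_succ k)) le_rfl
      have hY2 : Measurable[fragSA U (k+1)] (Y k j) :=
        (ih j h2).mono (fragSA_mono U (Nat.le_succ k)) le_rfl
      exact ((measurable_const.sub hU).mul hY1).add (hU.mul hY2)

lemma frag_indep (P : Measure Ω) [IsProbabilityMeasure P] (U : ℕ → ℕ → Ω → ℝ)
    (hUm : ∀ k j, Measurable (U k j))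
    (hUindep : iIndepFun (fun kj : ℕ × ℕ => U kj.1 kj.2) P)
    (k j : ℕ) :
    Indep (fragSA U k) (MeasurableSpace.comap (U k j) inferInstance) P := by
  have h_indep : iIndep (fun p : ℕ × ℕ => MeasurableSpace.comap (U p.1 p.2) inferInstance) P :=
    (iIndepFun_iff_iIndep _ _ _).mp hUindep
  have h_le : ∀ p : ℕ × ℕ, MeasurableSpace.comap (U p.1 p.2) inferInstance ≤ m0 :=
    fun p => (hUm p.1 p.2).comap_le
  have hd : Disjoint {p : ℕ × ℕ | p.1 < k} {(k, j)} := by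
    simp only [Set.disjoint_singleton_right, Set.mem_setOf_eq]
    exact lt_irrefl k
  have h := indep_iSup_of_disjoint h_le h_indep hd
  have h2 : (⨆ p ∈ ({(k, j)} : Set (ℕ × ℕ)),
      MeasurableSpace.comap (U p.1 p.2) inferInstance) =
      MeasurableSpace.comap (U k j) inferInstance := by
    simp
  rw [h2] at h
  exact h

lemma frag_indepFun (P : Measure Ω) [IsProbabilityMeasure P] (U : ℕ → ℕ → Ω → ℝ)
    (hUm : ∀ k j, Measurable (U k j))
    (hUindep : iIndepFun (fun kj : ℕ × ℕ => U kj.1 kj.2) P)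
    {k j : ℕ} {f g : Ω → ℝ} (hf : Measurable[fragSA U k] f)
    {g0 : ℝ → ℝ} (hg0 : Measurable g0) (hg : g = fun ω => g0 (U k j ω)) :
    IndepFun f g P := by
  rw [IndepFun_iff_Indep]
  refine indep_of_indep_of_le_left (indep_of_indep_of_le_right
    (frag_indep P U hUm hUindep k j) ?_) hf.comap_le
  subst hg
  exact Measurable.comap_le (hg0.comp (Measurable.of_comap_le (le_refl (MeasurableSpace.comap (U k j) inferInstance))))

lemma frag_wodd (U Y : ℕ → ℕ → Ω → ℝ)
    (hYeven : ∀ k j, j ≤ 2 ^ k → ∀ ω, Y (k+1) (2*j) ω = Y k j ω)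
    (hYodd : ∀ k j, 1 ≤ j → j ≤ 2 ^ k → ∀ ω,
      Y (k+1) (2*j - 1) ω = (1 - U k j ω) * Y k (j-1) ω + U k j ω * Y k j ω)
    {k j : ℕ} (h1 : 1 ≤ j) (h2 : j ≤ 2 ^ k) (ω : Ω) :
    Y (k+1) (2*j-1) ω - Y (k+1) (2*j-1-1) ω = U k j ω * (Y k j ω - Y k (j-1) ω) := by
  have e1 := hYodd k j h1 h2 ω
  have e2 : Y (k+1) (2*j-1-1) ω = Y k (j-1) ω := by
    rw [show 2*j-1-1 = 2*(j-1) by omega]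
    exact hYeven k (j-1) (le_trans (Nat.sub_le _ _) h2) ω
  rw [e1, e2]; ring

lemma frag_weven (U Y : ℕ → ℕ → Ω → ℝ)
    (hYeven : ∀ k j, j ≤ 2 ^ k → ∀ ω, Y (k+1) (2*j) ω = Y k j ω)
    (hYodd : ∀ k j, 1 ≤ j → j ≤ 2 ^ k → ∀ ω,
      Y (k+1) (2*j - 1) ω = (1 - U k j ω) * Y k (j-1) ω + U k j ω * Y k j ω)
    {k j : ℕ} (h1 : 1 ≤ j) (h2 : j ≤ 2 ^ k) (ω : Ω) :
    Y (k+1) (2*j) ω - Y (k+1) (2*j-1) ω = (1 - U k j ω) * (Y k j ω - Y k (j-1) ω) := by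
  rw [hYeven k j h2 ω, hYodd k j h1 h2 ω]; ring

lemma frag_U_mem (P : Measure Ω) (U : ℕ → ℕ → Ω → ℝ) (hUm : ∀ k j, Measurable (U k j))
    (hUlaw : ∀ k j, Measure.map (U k j) P = volume.restrict (Set.Icc (0:ℝ) 1))
    (k j : ℕ) : ∀ᵐ ω ∂P, U k j ω ∈ Set.Icc (0:ℝ) 1 := by
  have h : P ((U k j) ⁻¹' (Set.Icc (0:ℝ) 1)ᶜ) = 0 := by
    have := Measure.map_apply (μ := P) (hUm k j) (measurableSet_Icc (a := (0:ℝ)) (b := 1)).compl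
    rw [hUlaw k j] at this
    rw [← this]
    rw [Measure.restrict_apply measurableSet_Icc.compl]
    simp
  rw [ae_iff]
  have hset : {a | ¬ U k j a ∈ Set.Icc (0:ℝ) 1} = (U k j) ⁻¹' (Set.Icc (0:ℝ) 1)ᶜ := rfl
  rw [hset]; exact h

lemma frag_w_bounds (P : Measure Ω) (U Y : ℕ → ℕ → Ω → ℝ)
    (hUm : ∀ k j, Measurable (U k j))
    (hUlaw : ∀ k j, Measure.map (U k j) P = volume.restrict (Set.Icc (0:ℝ) 1))
    (hY00 : ∀ ω, Y 0 0 ω = 0) (hY01 : ∀ ω, Y 0 1 ω = 1)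
    (hYeven : ∀ k j, j ≤ 2 ^ k → ∀ ω, Y (k+1) (2*j) ω = Y k j ω)
    (hYodd : ∀ k j, 1 ≤ j → j ≤ 2 ^ k → ∀ ω,
      Y (k+1) (2*j - 1) ω = (1 - U k j ω) * Y k (j-1) ω + U k j ω * Y k j ω) :
    ∀ k, ∀ᵐ ω ∂P, ∀ j, 1 ≤ j → j ≤ 2 ^ k →
      Y k j ω - Y k (j-1) ω ∈ Set.Icc (0:ℝ) 1 := by
  intro k
  induction k with
  | zero =>
    filter_upwards with ω j h1 h2
    have : j = 1 := by omega
    subst this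
    simp [hY00, hY01]
  | succ k ih =>
    have hUa : ∀ᵐ ω ∂P, ∀ j : ℕ, U k j ω ∈ Set.Icc (0:ℝ) 1 :=
      ae_all_iff.mpr fun j => frag_U_mem P U hUm hUlaw k j
    filter_upwards [ih, hUa] with ω hw hU m h1 h2
    rcases Nat.even_or_odd m with ⟨r, hr⟩ | ⟨r, hr⟩
    · have hm : m = 2 * r := by omega
      have hr1 : 1 ≤ r := by omega
      have hr2 : r ≤ 2 ^ k := by rw [pow_succ] at h2; omega
      have := frag_weven U Y hYeven hYodd hr1 hr2 ω
      rw [hm, show 2*r-1 = 2*r-1 from rfl]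
      rw [this]
      have h01 := hU r
      have hw01 := hw r hr1 hr2
      simp only [Set.mem_Icc] at *
      constructor
      · exact mul_nonneg (by linarith [h01.2]) hw01.1
      · calc (1 - U k r ω) * (Y k r ω - Y k (r-1) ω) ≤ 1 * 1 :=
            mul_le_mul (by linarith [h01.1]) hw01.2 hw01.1 one_pos.le
          _ = 1 := one_mul 1
    · have hj : m = 2 * (r+1) - 1 := by omega
      have hr1 : 1 ≤ r + 1 := by omega
      have hr2 : r + 1 ≤ 2 ^ k := by rw [pow_succ] at h2; omega
      have := frag_wodd U Y hYeven hYodd hr1 hr2 ω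
      rw [hj, this]
      have h01 := hU (r+1)
      have hw01 := hw (r+1) hr1 hr2
      simp only [Set.mem_Icc] at *
      constructor
      · exact mul_nonneg h01.1 hw01.1
      · calc U k (r+1) ω * (Y k (r+1) ω - Y k (r+1-1) ω) ≤ 1 * 1 :=
            mul_le_mul h01.2 hw01.2 hw01.1 one_pos.le
          _ = 1 := one_mul 1

lemma frag_abs_rpow_integral {α : ℝ} (hα : -1 < α) :
    ∫ x in Set.Icc (0:ℝ) 1, |x| ^ α = (1 + α)⁻¹ := by
  rw [MeasureTheory.integral_Icc_eq_integral_Ioc,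
    ← intervalIntegral.integral_of_le (zero_le_one)]
  have : ∀ x ∈ Set.uIcc (0:ℝ) 1, |x| ^ α = x ^ α := by
    intro x hx
    rw [Set.uIcc_of_le zero_le_one] at hx
    rw [abs_of_nonneg hx.1]
  rw [intervalIntegral.integral_congr this, integral_rpow (Or.inl hα)]
  rw [Real.one_rpow, Real.zero_rpow (by linarith)]
  ring

lemma frag_momU (P : Measure Ω) [IsProbabilityMeasure P] (U : ℕ → ℕ → Ω → ℝ)
    (hUm : ∀ k j, Measurable (U k j))
    (hUlaw : ∀ k j, Measure.map (U k j) P = volume.restrict (Set.Icc (0:ℝ) 1))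
    (k j : ℕ) {α : ℝ} (hα : -1 < α) :
    ∫ ω, |U k j ω| ^ α ∂P = (1 + α)⁻¹ := by
  have hf : AEStronglyMeasurable (fun x : ℝ => |x| ^ α)
      (Measure.map (U k j) P) := by
    refine Measurable.aestronglyMeasurable ?_
    exact measurable_abs.pow measurable_const
  rw [← integral_map (hUm k j).aemeasurable hf, hUlaw k j]
  exact frag_abs_rpow_integral hα

lemma frag_momU' (P : Measure Ω) [IsProbabilityMeasure P] (U : ℕ → ℕ → Ω → ℝ)
    (hUm : ∀ k j, Measurable (U k j))
    (hUlaw : ∀ k j, Measure.map (U k j) P = volume.restrict (Set.Icc (0:ℝ) 1))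
    (k j : ℕ) {α : ℝ} (hα : -1 < α) :
    ∫ ω, |1 - U k j ω| ^ α ∂P = (1 + α)⁻¹ := by
  have hf : AEStronglyMeasurable (fun x : ℝ => |1 - x| ^ α)
      (Measure.map (U k j) P) := by
    refine Measurable.aestronglyMeasurable ?_
    exact (measurable_const.sub measurable_id).abs.pow measurable_const
  rw [← integral_map (hUm k j).aemeasurable hf, hUlaw k j]
  rw [MeasureTheory.integral_Icc_eq_integral_Ioc,
    ← intervalIntegral.integral_of_le (zero_le_one)]
  have := intervalIntegral.integral_comp_sub_left (a := (0:ℝ)) (b := 1)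
    (fun x : ℝ => |x| ^ α) 1
  simp only [sub_self, sub_zero] at this
  rw [this, intervalIntegral.integral_of_le (zero_le_one),
    ← MeasureTheory.integral_Icc_eq_integral_Ioc]
  exact frag_abs_rpow_integral hα

lemma frag_mom_w (P : Measure Ω) [IsProbabilityMeasure P] (U Y : ℕ → ℕ → Ω → ℝ)
    (hUm : ∀ k j, Measurable (U k j))
    (hUlaw : ∀ k j, Measure.map (U k j) P = volume.restrict (Set.Icc (0:ℝ) 1))
    (hUindep : iIndepFun (fun kj : ℕ × ℕ => U kj.1 kj.2) P)
    (hY00 : ∀ ω, Y 0 0 ω = 0) (hY01 : ∀ ω, Y 0 1 ω = 1)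
    (hYeven : ∀ k j, j ≤ 2 ^ k → ∀ ω, Y (k+1) (2*j) ω = Y k j ω)
    (hYodd : ∀ k j, 1 ≤ j → j ≤ 2 ^ k → ∀ ω,
      Y (k+1) (2*j - 1) ω = (1 - U k j ω) * Y k (j-1) ω + U k j ω * Y k j ω)
    {α : ℝ} (hα : 0 < α) :
    ∀ k j, 1 ≤ j → j ≤ 2 ^ k →
      ∫ ω, |Y k j ω - Y k (j-1) ω| ^ α ∂P = ((1 + α)⁻¹) ^ k := by
  have hmY := measurable_Y_frag U Y hY00 hY01 hYeven hYodd
  intro k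
  induction k with
  | zero =>
    intro j h1 h2
    have : j = 1 := by omega
    subst this
    have : (fun ω => |Y 0 1 ω - Y 0 0 ω| ^ α) = fun _ : Ω => (1:ℝ) := by
      funext ω
      rw [hY01 ω, hY00 ω]
      norm_num
    rw [this]
    simp
  | succ k ih =>
    intro m h1 h2
    have key : ∀ j, 1 ≤ j → j ≤ 2 ^ k → ∀ g0 : ℝ → ℝ, Measurable g0 →
        (∫ ω, g0 (U k j ω) ∂P = (1+α)⁻¹) →
        (∀ ω, 0 ≤ g0 (U k j ω)) →
        ∫ ω, g0 (U k j ω) * |Y k j ω - Y k (j-1) ω| ^ α ∂P = ((1 + α)⁻¹) ^ (k+1) := by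
      intro j hj1 hj2 g0 hg0 hint _
      have hfm : Measurable[fragSA U k] (fun ω => |Y k j ω - Y k (j-1) ω| ^ α) := by
        letI : MeasurableSpace Ω := fragSA U k
        have h1 : Measurable[fragSA U k] (Y k j) := hmY k j hj2
        have h2 : Measurable[fragSA U k] (Y k (j-1)) :=
          hmY k (j-1) (le_trans (Nat.sub_le _ _) hj2)
        exact ((h1.sub h2).abs).pow measurable_const
      have hindep : IndepFun (fun ω => g0 (U k j ω))
          (fun ω => |Y k j ω - Y k (j-1) ω| ^ α) P :=
        (frag_indepFun P U hUm hUindep hfm hg0 rfl).symm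
      have := hindep.integral_mul_eq_mul_integral
        ((hg0.comp (hUm k j)).aestronglyMeasurable)
        ((hfm.mono (fragSA_le U hUm k) le_rfl).aestronglyMeasurable)
      rw [show (fun ω => g0 (U k j ω) * |Y k j ω - Y k (j-1) ω| ^ α) =
        (fun ω => g0 (U k j ω)) * (fun ω => |Y k j ω - Y k (j-1) ω| ^ α) from rfl, this,
        hint, ih j hj1 hj2, pow_succ]
      ring
    rcases Nat.even_or_odd m with ⟨r, hr⟩ | ⟨r, hr⟩
    · have hm : m = 2 * r := by omega
      have hr1 : 1 ≤ r := by omega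
      have hr2 : r ≤ 2 ^ k := by rw [pow_succ] at h2; omega
      have hpt : ∀ ω, |Y (k+1) m ω - Y (k+1) (m-1) ω| ^ α
          = |1 - U k r ω| ^ α * |Y k r ω - Y k (r-1) ω| ^ α := by
        intro ω
        rw [hm, show 2*r - 1 = 2*r - 1 from rfl,
          frag_weven U Y hYeven hYodd hr1 hr2 ω, abs_mul,
          Real.mul_rpow (abs_nonneg _) (abs_nonneg _)]
      simp only [hpt]
      exact key r hr1 hr2 (fun x => |1 - x| ^ α)
        ((measurable_const.sub measurable_id).abs.pow measurable_const)
        (frag_momU' P U hUm hUlaw k r (by linarith))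
        (fun ω => Real.rpow_nonneg (abs_nonneg _) α)
    · have hm : m = 2 * (r+1) - 1 := by omega
      have hr1 : 1 ≤ r + 1 := by omega
      have hr2 : r + 1 ≤ 2 ^ k := by rw [pow_succ] at h2; omega
      have hpt : ∀ ω, |Y (k+1) m ω - Y (k+1) (m-1) ω| ^ α
          = |U k (r+1) ω| ^ α * |Y k (r+1) ω - Y k (r+1-1) ω| ^ α := by
        intro ω
        rw [hm, show 2*(r+1) - 1 - 1 = 2*(r+1)-1-1 from rfl,
          frag_wodd U Y hYeven hYodd hr1 hr2 ω, abs_mul,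
          Real.mul_rpow (abs_nonneg _) (abs_nonneg _)]
      simp only [hpt]
      exact key (r+1) hr1 hr2 (fun x => |x| ^ α)
        (measurable_abs.pow measurable_const)
        (frag_momU P U hUm hUlaw k (r+1) (by linarith))
        (fun ω => Real.rpow_nonneg (abs_nonneg _) α)

lemma frag_main1 (P : Measure Ω) [IsProbabilityMeasure P] (U Y : ℕ → ℕ → Ω → ℝ)
    (hUm : ∀ k j, Measurable (U k j))
    (hUlaw : ∀ k j, Measure.map (U k j) P = volume.restrict (Set.Icc (0:ℝ) 1))
    (hUindep : iIndepFun (fun kj : ℕ × ℕ => U kj.1 kj.2) P)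
    (hY00 : ∀ ω, Y 0 0 ω = 0) (hY01 : ∀ ω, Y 0 1 ω = 1)
    (hYeven : ∀ k j, j ≤ 2 ^ k → ∀ ω, Y (k+1) (2*j) ω = Y k j ω)
    (hYodd : ∀ k j, 1 ≤ j → j ≤ 2 ^ k → ∀ ω,
      Y (k+1) (2*j - 1) ω = (1 - U k j ω) * Y k (j-1) ω + U k j ω * Y k j ω)
    (k : ℕ) {α : ℝ} (hα : 1 ≤ α) :
    ∫ ω, (Finset.Icc 1 (2 ^ k)).sup' (Finset.nonempty_Icc.mpr Nat.one_le_two_pow)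
        (fun j => Y k j ω - Y k (j-1) ω) ∂P
      ≤ (2 / (1 + α)) ^ ((k : ℝ) / α) := by
  have hα0 : (0:ℝ) < α := by linarith
  have hαne : α ≠ 0 := ne_of_gt hα0
  have hmY := measurable_Y_frag U Y hY00 hY01 hYeven hYodd
  set T : Finset ℕ := Finset.Icc 1 (2 ^ k) with hT
  have hTne : T.Nonempty := Finset.nonempty_Icc.mpr Nat.one_le_two_pow
  have hmem : ∀ j ∈ T, 1 ≤ j ∧ j ≤ 2 ^ k := by
    intro j hj; rw [hT, Finset.mem_Icc] at hj; exact hj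
  have hcard : T.card = 2 ^ k := by simp [hT, Nat.card_Icc]
  have hw : ∀ j ∈ T, Measurable (fun ω => Y k j ω - Y k (j-1) ω) := by
    intro j hj
    exact (((hmY k j (hmem j hj).2).sub
      (hmY k (j-1) (le_trans (Nat.sub_le _ _) (hmem j hj).2))).mono
      (fragSA_le U hUm k) le_rfl)
  have hbd := frag_w_bounds P U Y hUm hUlaw hY00 hY01 hYeven hYodd k
  have habs1 : ∀ᵐ ω ∂P, ∀ j ∈ T, |Y k j ω - Y k (j-1) ω| ≤ 1 := by
    filter_upwards [hbd] with ω h j hj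
    have hj2 := h j (hmem j hj).1 (hmem j hj).2
    rw [abs_le]; simp only [Set.mem_Icc] at hj2
    constructor <;> linarith [hj2.1, hj2.2]
  set M : Ω → ℝ := fun ω => T.sup' hTne (fun j => Y k j ω - Y k (j-1) ω) with hM
  set S : Ω → ℝ := fun ω => ∑ j ∈ T, |Y k j ω - Y k (j-1) ω| ^ α with hS
  have hS0 : ∀ ω, 0 ≤ S ω := fun ω =>
    Finset.sum_nonneg fun j _ => Real.rpow_nonneg (abs_nonneg _) α
  have hMm : Measurable M := by
    have : M = T.sup' hTne (fun j ω => Y k j ω - Y k (j-1) ω) := by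
      funext ω
      rw [hM]
      exact (Finset.sup'_apply hTne (fun j ω => Y k j ω - Y k (j-1) ω) ω).symm
    rw [this]
    exact Finset.measurable_sup' hTne hw
  have hSm : Measurable S := by
    refine Finset.measurable_sum T fun j hj => ?_
    exact (hw j hj).abs.pow measurable_const
  have hwbd : ∀ᵐ ω ∂P, ∀ j ∈ T, |Y k j ω - Y k (j-1) ω| ^ α ≤ 1 := by
    filter_upwards [habs1] with ω h j hj
    calc |Y k j ω - Y k (j-1) ω| ^ α ≤ 1 ^ α :=
        Real.rpow_le_rpow (abs_nonneg _) (h j hj) (le_of_lt hα0)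
      _ = 1 := Real.one_rpow α
  have hMbd : ∀ᵐ ω ∂P, ‖M ω‖ ≤ 1 := by
    filter_upwards [hbd] with ω h
    rw [Real.norm_eq_abs, abs_le]
    have h1T : (1:ℕ) ∈ T := by rw [hT, Finset.mem_Icc]; exact ⟨le_rfl, Nat.one_le_two_pow⟩
    constructor
    · have h1 := (h 1 le_rfl Nat.one_le_two_pow).1
      have hle : Y k 1 ω - Y k (1-1) ω ≤ M ω :=
        Finset.le_sup' (fun j => Y k j ω - Y k (j-1) ω) h1T
      linarith
    · refine Finset.sup'_le hTne _ fun j hj => ?_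
      exact (h j (hmem j hj).1 (hmem j hj).2).2
  have hSbd : ∀ᵐ ω ∂P, ‖S ω‖ ≤ ((2:ℝ) ^ k : ℝ) := by
    filter_upwards [hwbd] with ω h
    rw [Real.norm_eq_abs, abs_of_nonneg (hS0 ω)]
    calc S ω ≤ ∑ _j ∈ T, (1:ℝ) := Finset.sum_le_sum h
      _ = ((2:ℝ) ^ k : ℝ) := by
        rw [Finset.sum_const, hcard, nsmul_eq_mul, mul_one, Nat.cast_pow]
        norm_num
  have hMint : Integrable M P :=
    (integrable_const (1:ℝ)).mono' hMm.aestronglyMeasurable hMbd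
  have hSint : Integrable S P :=
    (integrable_const ((2:ℝ)^k)).mono' hSm.aestronglyMeasurable hSbd
  have hintj : ∀ j ∈ T, Integrable (fun ω => |Y k j ω - Y k (j-1) ω| ^ α) P := by
    intro j hj
    refine (integrable_const (1:ℝ)).mono'
      ((hw j hj).abs.pow measurable_const).aestronglyMeasurable ?_
    filter_upwards [hwbd] with ω h
    rw [Real.norm_eq_abs, abs_of_nonneg (Real.rpow_nonneg (abs_nonneg _) α)]
    exact h j hj
  have hSval : ∫ ω, S ω ∂P = (2 / (1 + α)) ^ k := by
    have e1 : ∫ ω, S ω ∂P = ∑ j ∈ T, ∫ ω, |Y k j ω - Y k (j-1) ω| ^ α ∂P :=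
      integral_finset_sum T hintj
    have e2 : ∀ j ∈ T, ∫ ω, |Y k j ω - Y k (j-1) ω| ^ α ∂P = ((1+α)⁻¹) ^ k :=
      fun j hj => frag_mom_w P U Y hUm hUlaw hUindep hY00 hY01 hYeven hYodd hα0
        k j (hmem j hj).1 (hmem j hj).2
    rw [e1, Finset.sum_congr rfl e2, Finset.sum_const, hcard, nsmul_eq_mul,
      Nat.cast_pow, div_eq_mul_inv, mul_pow]
    norm_num
  have hptw : ∀ᵐ ω ∂P, M ω ≤ S ω ^ α⁻¹ := by
    filter_upwards [hbd] with ω h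
    refine Finset.sup'_le hTne _ fun j hj => ?_
    have h0 : 0 ≤ Y k j ω - Y k (j-1) ω := (h j (hmem j hj).1 (hmem j hj).2).1
    calc Y k j ω - Y k (j-1) ω = (|Y k j ω - Y k (j-1) ω| ^ α) ^ α⁻¹ := by
          rw [Real.rpow_rpow_inv (abs_nonneg _) hαne, abs_of_nonneg h0]
      _ ≤ S ω ^ α⁻¹ := by
          refine Real.rpow_le_rpow (Real.rpow_nonneg (abs_nonneg _) α) ?_
            (inv_nonneg.mpr (le_of_lt hα0))
          exact Finset.single_le_sum
            (f := fun i => |Y k i ω - Y k (i-1) ω| ^ α)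
            (fun i _ => Real.rpow_nonneg (abs_nonneg _) α) hj
  have hgS_int : Integrable (fun ω => S ω ^ α⁻¹) P := by
    refine (integrable_const (((2:ℝ)^k) ^ α⁻¹)).mono'
      ((Real.continuous_rpow_const (inv_nonneg.mpr (le_of_lt hα0))).measurable.comp
        hSm).aestronglyMeasurable ?_
    filter_upwards [hSbd] with ω h
    rw [Real.norm_eq_abs, abs_of_nonneg (Real.rpow_nonneg (hS0 ω) _)]
    refine Real.rpow_le_rpow (hS0 ω) ?_ (inv_nonneg.mpr (le_of_lt hα0))
    rw [Real.norm_eq_abs, abs_of_nonneg (hS0 ω)] at h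
    exact h
  have hjensen : ∫ ω, S ω ^ α⁻¹ ∂P ≤ (∫ ω, S ω ∂P) ^ α⁻¹ := by
    have hconc : ConcaveOn ℝ (Set.Ici 0) (fun x : ℝ => x ^ α⁻¹) :=
      Real.concaveOn_rpow (inv_nonneg.mpr (le_of_lt hα0))
        (by
          have h := mul_inv_cancel₀ hαne
          nlinarith [inv_pos.mpr hα0])
    have hcont : ContinuousOn (fun x : ℝ => x ^ α⁻¹) (Set.Ici 0) :=
      (Real.continuous_rpow_const (inv_nonneg.mpr (le_of_lt hα0))).continuousOn
    have hfs : ∀ᵐ ω ∂P, S ω ∈ Set.Ici (0:ℝ) :=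
      Filter.Eventually.of_forall fun ω => hS0 ω
    exact hconc.le_map_integral hcont isClosed_Ici hfs hSint hgS_int
  have hMS : ∫ ω, M ω ∂P ≤ ∫ ω, S ω ^ α⁻¹ ∂P :=
    integral_mono_ae hMint hgS_int hptw
  have final : ((2 / (1 + α)) ^ k : ℝ) ^ α⁻¹ = (2 / (1 + α)) ^ ((k : ℝ) / α) := by
    have hpos : (0:ℝ) ≤ 2 / (1 + α) := by positivity
    rw [← Real.rpow_natCast (2 / (1 + α)) k, ← Real.rpow_mul hpos, div_eq_mul_inv ((k:ℝ)) α]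
  calc ∫ ω, M ω ∂P ≤ ∫ ω, S ω ^ α⁻¹ ∂P := hMS
    _ ≤ (∫ ω, S ω ∂P) ^ α⁻¹ := hjensen
    _ = ((2 / (1 + α)) ^ k : ℝ) ^ α⁻¹ := by rw [hSval]
    _ = (2 / (1 + α)) ^ ((k : ℝ) / α) := final

lemma frag_root_exists :
    ∃ c : ℝ, Real.exp (-(1/2)) ≤ c ∧ 0 < c ∧ c < 1 ∧
      c⁻¹ = -2 * Real.exp 1 * Real.log c := by
  set a : ℝ := Real.exp (-(1/2)) with ha
  have ha0 : 0 < a := Real.exp_pos _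
  have ha1 : a ≤ 1 := by
    rw [ha, show (1:ℝ) = Real.exp 0 from (Real.exp_zero).symm]
    exact Real.exp_le_exp.mpr (by norm_num)
  set h : ℝ → ℝ := fun x => x⁻¹ + 2 * Real.exp 1 * Real.log x with hh
  have hcont : ContinuousOn h (Set.Icc a 1) := by
    refine ContinuousOn.add ?_ ?_
    · exact ContinuousOn.inv₀ continuousOn_id fun x hx => ne_of_gt (lt_of_lt_of_le ha0 hx.1)
    · exact ContinuousOn.mul continuousOn_const
        (Real.continuousOn_log.mono fun x hx => ne_of_gt (lt_of_lt_of_le ha0 hx.1))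
  have hfa : h a ≤ 0 := by
    have hlog : Real.log a = -(1/2) := by rw [ha, Real.log_exp]
    have hinv : a⁻¹ = Real.exp (1/2) := by
      rw [ha, ← Real.exp_neg]; norm_num
    show a⁻¹ + 2 * Real.exp 1 * Real.log a ≤ 0
    rw [hlog, hinv]
    have : Real.exp (1/2) ≤ Real.exp 1 := Real.exp_le_exp.mpr (by norm_num)
    linarith
  have hfb : (0:ℝ) ≤ h 1 := by
    rw [hh]; simp
  have := intermediate_value_Icc ha1 hcont
  have hmem : (0:ℝ) ∈ Set.Icc (h a) (h 1) := ⟨hfa, hfb⟩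
  obtain ⟨c, hc, hc0⟩ := this hmem
  refine ⟨c, hc.1, lt_of_lt_of_le ha0 hc.1, ?_, ?_⟩
  · rcases lt_or_eq_of_le hc.2 with h' | h'
    · exact h'
    · exfalso
      rw [h'] at hc0
      rw [hh] at hc0
      simp at hc0
  · have : c⁻¹ + 2 * Real.exp 1 * Real.log c = 0 := hc0
    linarith [this]

end FragAux


/-- Let `M_k` be the maximal interval length at generation `k` of the recursive uniform
fragmentation of `[0,1]`. Then `E[M_k] ≤ (2/(1+α))^{k/α}` for every `α ≥ 1`; in
particular `E[M_k] ≤ ρ^k` where `ρ` is the larger root in `(0,1)` of `ρ⁻¹ = -2e ln ρ`. -/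
theorem fragmentation_max_length_bound {Ω : Type*} [MeasurableSpace Ω] (P : Measure Ω)
    [IsProbabilityMeasure P] (U : ℕ → ℕ → Ω → ℝ) (Y : ℕ → ℕ → Ω → ℝ)
    (hUm : ∀ k j, Measurable (U k j))
    (hUlaw : ∀ k j, Measure.map (U k j) P = volume.restrict (Set.Icc (0:ℝ) 1))
    (hUindep : iIndepFun (fun kj : ℕ × ℕ => U kj.1 kj.2) P)
    (hY00 : ∀ ω, Y 0 0 ω = 0) (hY01 : ∀ ω, Y 0 1 ω = 1)
    (hYeven : ∀ k j, j ≤ 2 ^ k → ∀ ω, Y (k+1) (2*j) ω = Y k j ω)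
    (hYodd : ∀ k j, 1 ≤ j → j ≤ 2 ^ k → ∀ ω,
      Y (k+1) (2*j - 1) ω = (1 - U k j ω) * Y k (j-1) ω + U k j ω * Y k j ω) :
    ∀ k : ℕ,
      (∀ α : ℝ, 1 ≤ α →
        ∫ ω, (Finset.Icc 1 (2 ^ k)).sup' (Finset.nonempty_Icc.mpr Nat.one_le_two_pow)
            (fun j => Y k j ω - Y k (j-1) ω) ∂P
          ≤ (2 / (1 + α)) ^ ((k : ℝ) / α))
      ∧ (∀ ρ : ℝ, 0 < ρ → ρ < 1 → ρ⁻¹ = -2 * Real.exp 1 * Real.log ρ →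
          (∀ ρ' : ℝ, 0 < ρ' → ρ' < 1 → ρ'⁻¹ = -2 * Real.exp 1 * Real.log ρ' → ρ' ≤ ρ) →
          ∫ ω, (Finset.Icc 1 (2 ^ k)).sup' (Finset.nonempty_Icc.mpr Nat.one_le_two_pow)
              (fun j => Y k j ω - Y k (j-1) ω) ∂P ≤ ρ ^ k) := by
  intro k
  constructor
  · intro α hα
    exact frag_main1 P U Y hUm hUlaw hUindep hY00 hY01 hYeven hYodd k hα
  · intro ρ hρ0 hρ1 heq hmax
    -- ρ is at least exp(-1/2)
    obtain ⟨c, hca, hc0, hc1, hceq⟩ := frag_root_exists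
    have hρa : Real.exp (-(1/2)) ≤ ρ := le_trans hca (hmax c hc0 hc1 hceq)
    set L : ℝ := Real.log ρ with hL
    have hLneg : L < 0 := Real.log_neg hρ0 hρ1
    have hLne : L ≠ 0 := ne_of_lt hLneg
    have hLge : -(1/2) ≤ L := by
      rw [hL, show -(1/2 : ℝ) = Real.log (Real.exp (-(1/2))) from (Real.log_exp _).symm]
      exact Real.log_le_log (Real.exp_pos _) hρa
    set α : ℝ := -L⁻¹ - 1 with hαdef
    have hLinv : L * L⁻¹ = 1 := mul_inv_cancel₀ hLne
    have hα1 : 1 ≤ α := by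
      rw [hαdef]
      have hinv : L⁻¹ ≤ -2 := by nlinarith
      linarith
    have hα0 : (0:ℝ) < α := by linarith
    have h1α : 1 + α = -L⁻¹ := by rw [hαdef]; ring
    have hbase : 2 / (1 + α) = ρ ^ α := by
      rw [h1α]
      have h2 : 2 / (-L⁻¹) = -2 * L := by
        field_simp
      rw [h2]
      have h3 : ρ ^ α = Real.exp (α * L) := by
        rw [Real.rpow_def_of_pos hρ0, hL, mul_comm]
      rw [h3]
      have h4 : α * L = -1 - L := by
        rw [hαdef]; field_simp
      rw [h4]
      have h5 : Real.exp (-1 - L) = (Real.exp 1)⁻¹ * ρ⁻¹ := by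
        rw [show -1 - L = -1 + -L by ring, Real.exp_add, Real.exp_neg, Real.exp_neg,
          hL, Real.exp_log hρ0]
      rw [h5, heq]
      have hepos : (0:ℝ) < Real.exp 1 := Real.exp_pos 1
      field_simp
    have hfin : (2 / (1 + α)) ^ ((k : ℝ) / α) = ρ ^ k := by
      rw [hbase, ← Real.rpow_natCast ρ k, ← Real.rpow_mul (le_of_lt hρ0)]
      congr 1
      field_simp
    calc ∫ ω, (Finset.Icc 1 (2 ^ k)).sup' (Finset.nonempty_Icc.mpr Nat.one_le_two_pow)
            (fun j => Y k j ω - Y k (j-1) ω) ∂P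
        ≤ (2 / (1 + α)) ^ ((k : ℝ) / α) :=
          frag_main1 P U Y hUm hUlaw hUindep hY00 hY01 hYeven hYodd k hα1
      _ = ρ ^ k := hfin
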